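/- The space K_{[a,b]} of Stieltjes–Volterra kernels of type B^∞ on [a,b]×[a,b], equipped with the norm ‖κ‖_{[a,b]} := sup_{t∈[a,b]} ‖κ(t,·)‖_{BV([a,b])}, is a Banach space: every Cauchy sequence (κ_k) in K_{[a,b]} converges in this norm to some κ ∈ K_{[a,b]}, and moreover κ_k → κ uniformly on [a,b]×[a,b]. -/

import Mathlib

open MeasureTheory Set
open scoped ENNReal NNReal
open scoped Matrix.Norms.L2Operator

noncomputable section

-- The Lebesgue–Stieltjes measure of a monotone function (zero if not monotone).
open scoped Classical in
noncomputable def monoMeasure (m : ℝ → ℝ) : Measure ℝ :=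
  if h : Monotone m then h.stieltjesFunction.measure else 0

/-- The function `f` clamped to the interval `[c,e]`. -/
def clampOn (f : ℝ → ℝ) (c e : ℝ) : ℝ → ℝ := fun x => f (max c (min x e))

/-- Cumulative total variation of the clamped function. -/
def varFun (f : ℝ → ℝ) (c e : ℝ) : ℝ → ℝ :=
  fun x => (eVariationOn (clampOn f c e) (Icc c x)).toReal

/-- Positive (Jordan) part. -/
def posPartFun (f : ℝ → ℝ) (c e : ℝ) : ℝ → ℝ :=
  fun x => (varFun f c e x + clampOn f c e x - f c) / 2

/-- Negative (Jordan) part. -/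
def negPartFun (f : ℝ → ℝ) (c e : ℝ) : ℝ → ℝ :=
  fun x => (varFun f c e x - clampOn f c e x + f c) / 2

/-- Lebesgue–Stieltjes integral of `φ` against (the measure associated with the
restriction to `[c,e)` of) the function `f`, over `[c,e)`. -/
def lsIntIcoR (f : ℝ → ℝ) (c e : ℝ) (φ : ℝ → ℝ) : ℝ :=
  (∫ x in Ico c e, φ x ∂(monoMeasure (posPartFun f c e))) -
  (∫ x in Ico c e, φ x ∂(monoMeasure (negPartFun f c e)))

/-- Same, over the open interval `(c,e)`. -/
def lsIntIooR (f : ℝ → ℝ) (c e : ℝ) (φ : ℝ → ℝ) : ℝ :=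
  (∫ x in Ioo c e, φ x ∂(monoMeasure (posPartFun f c e))) -
  (∫ x in Ioo c e, φ x ∂(monoMeasure (negPartFun f c e)))

/-- Complex Lebesgue–Stieltjes integral `∫_{[c,e)} φ df`. -/
def lsIntIcoC (f : ℝ → ℂ) (c e : ℝ) (φ : ℝ → ℂ) : ℂ :=
  (lsIntIcoR (fun x => (f x).re) c e (fun x => (φ x).re)
    - lsIntIcoR (fun x => (f x).im) c e (fun x => (φ x).im))
  + Complex.I * (lsIntIcoR (fun x => (f x).re) c e (fun x => (φ x).im)
    + lsIntIcoR (fun x => (f x).im) c e (fun x => (φ x).re))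

def lsIntIooC (f : ℝ → ℂ) (c e : ℝ) (φ : ℝ → ℂ) : ℂ :=
  (lsIntIooR (fun x => (f x).re) c e (fun x => (φ x).re)
    - lsIntIooR (fun x => (f x).im) c e (fun x => (φ x).im))
  + Complex.I * (lsIntIooR (fun x => (f x).re) c e (fun x => (φ x).im)
    + lsIntIooR (fun x => (f x).im) c e (fun x => (φ x).re))

/-- `∫_{[c,e)} dF(τ) G(τ)` for matrix-valued `F` (the integrator) and `G`. -/
def lsIntIcoMM {d : ℕ} (F : ℝ → Matrix (Fin d) (Fin d) ℂ) (c e : ℝ)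
    (G : ℝ → Matrix (Fin d) (Fin d) ℂ) : Matrix (Fin d) (Fin d) ℂ :=
  Matrix.of fun i k => ∑ j, lsIntIcoC (fun τ => F τ i j) c e (fun τ => G τ j k)

/-- `∫_{[c,e)} dF(τ) g(τ)` for matrix-valued `F` and vector-valued `g`. -/
def lsIntIcoMV {d : ℕ} (F : ℝ → Matrix (Fin d) (Fin d) ℂ) (c e : ℝ)
    (g : ℝ → Fin d → ℂ) : Fin d → ℂ :=
  fun i => ∑ j, lsIntIcoC (fun τ => F τ i j) c e (fun τ => g τ j)

def lsIntIooMV {d : ℕ} (F : ℝ → Matrix (Fin d) (Fin d) ℂ) (c e : ℝ)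
    (g : ℝ → Fin d → ℂ) : Fin d → ℂ :=
  fun i => ∑ j, lsIntIooC (fun τ => F τ i j) c e (fun τ => g τ j)

instance matrixMeasurableSpace {d : ℕ} : MeasurableSpace (Matrix (Fin d) (Fin d) ℂ) :=
  inferInstanceAs (MeasurableSpace (Fin d → Fin d → ℂ))

/-- A Stieltjes–Volterra kernel of type `B^∞` on `[a,b] × [a,b]`. -/
def IsSVKernel (d : ℕ) (a b : ℝ) (κ : ℝ → ℝ → Matrix (Fin d) (Fin d) ℂ) : Prop :=
  Measurable ((Icc a b ×ˢ Icc a b).restrict (fun p : ℝ × ℝ => κ p.1 p.2)) ∧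
  (∀ t ∈ Icc a b, ∀ τ ∈ Icc a b, t ≤ τ → κ t τ = 0) ∧
  (∀ t ∈ Icc a b, ∀ x ∈ Icc a b, ContinuousWithinAt (κ t) (Icc a b ∩ Iio x) x) ∧
  (∃ C : ℝ, ∀ t ∈ Icc a b, eVariationOn (κ t) (Icc a b) ≤ ENNReal.ofReal C) ∧
  (∀ ε > (0:ℝ), ∃ η > (0:ℝ), ∀ t ∈ Icc a b, ∀ τ ∈ Icc a b, 0 < t - τ → t - τ < η →
      eVariationOn (κ t) (Ico τ t) < ENNReal.ofReal ε)

/-- The norm `‖κ‖_{[a,b]} = sup_t ‖κ(t,·)‖_{BV([a,b])}` (base point `b`). -/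
def KNorm (d : ℕ) (a b : ℝ) (κ : ℝ → ℝ → Matrix (Fin d) (Fin d) ℂ) : ℝ≥0∞ :=
  ⨆ t ∈ Icc a b, eVariationOn (κ t) (Icc a b)

/-- `ρ` is a resolvent of the kernel `κ`. -/
def IsResolvent (d : ℕ) (a b : ℝ) (κ ρ : ℝ → ℝ → Matrix (Fin d) (Fin d) ℂ) : Prop :=
  IsSVKernel d a b ρ ∧
  ∀ t ∈ Icc a b, ∀ β ∈ Icc a b,
    ρ t β = -κ t β + lsIntIcoMM (κ t) β t (fun τ => ρ τ β)

open Filter Topology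

lemma myEvarAdd {E : Type*} [SeminormedAddCommGroup E] (f g : ℝ → E) (s : Set ℝ) :
    eVariationOn (fun x => f x + g x) s ≤ eVariationOn f s + eVariationOn g s := by
  have h : ∀ p : ℕ × { u : ℕ → ℝ // Monotone u ∧ ∀ i, u i ∈ s },
      (∑ i ∈ Finset.range p.1,
        edist (f (p.2.1 (i + 1)) + g (p.2.1 (i + 1))) (f (p.2.1 i) + g (p.2.1 i)))
        ≤ eVariationOn f s + eVariationOn g s := by
    intro p
    calc (∑ i ∈ Finset.range p.1,
          edist (f (p.2.1 (i + 1)) + g (p.2.1 (i + 1))) (f (p.2.1 i) + g (p.2.1 i)))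
        ≤ ∑ i ∈ Finset.range p.1,
            (edist (f (p.2.1 (i + 1))) (f (p.2.1 i)) + edist (g (p.2.1 (i + 1))) (g (p.2.1 i))) :=
          Finset.sum_le_sum fun i _ => edist_add_add_le _ _ _ _
      _ = (∑ i ∈ Finset.range p.1, edist (f (p.2.1 (i + 1))) (f (p.2.1 i)))
          + ∑ i ∈ Finset.range p.1, edist (g (p.2.1 (i + 1))) (g (p.2.1 i)) :=
          Finset.sum_add_distrib
      _ ≤ _ := add_le_add (eVariationOn.sum_le (f := f) (n := p.1) p.2.2.1 p.2.2.2)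
          (eVariationOn.sum_le (f := g) (n := p.1) p.2.2.1 p.2.2.2)
  unfold eVariationOn
  exact iSup_le h

lemma myEvarNeg {E : Type*} [SeminormedAddCommGroup E] (f : ℝ → E) (s : Set ℝ) :
    eVariationOn (fun x => -f x) s = eVariationOn f s := by
  unfold eVariationOn
  congr 1 with p
  congr 1 with i
  exact edist_neg_neg _ _

lemma myEvarSubComm {E : Type*} [SeminormedAddCommGroup E] (f g : ℝ → E) (s : Set ℝ) :
    eVariationOn (fun x => f x - g x) s = eVariationOn (fun x => g x - f x) s := by
  rw [← myEvarNeg (fun x => g x - f x) s]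
  simp only [neg_sub]


/-- **Completeness of the space of Stieltjes–Volterra kernels of type `B^∞`.**

Every Cauchy sequence `κ k` in `K_{[a,b]}` (for the norm
`‖κ‖_{[a,b]} = sup_t ‖κ(t,·)‖_{BV([a,b])}`) converges in this norm to some
`κ ∈ K_{[a,b]}`, and moreover `κ k → κ` uniformly on `[a,b] × [a,b]`. -/
theorem svKernel_space_complete
    (d : ℕ) (hd : 0 < d) (a b : ℝ) (hab : a < b)
    (κs : ℕ → ℝ → ℝ → Matrix (Fin d) (Fin d) ℂ)
    (hker : ∀ k, IsSVKernel d a b (κs k))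
    (hcauchy : ∀ ε : ℝ, 0 < ε → ∃ M : ℕ, ∀ k l : ℕ, M ≤ k → M ≤ l →
      KNorm d a b (fun t τ => κs k t τ - κs l t τ) < ENNReal.ofReal ε) :
    ∃ κ : ℝ → ℝ → Matrix (Fin d) (Fin d) ℂ,
      IsSVKernel d a b κ ∧
      -- convergence in the kernel norm
      (∀ ε : ℝ, 0 < ε → ∃ M : ℕ, ∀ k : ℕ, M ≤ k →
        KNorm d a b (fun t τ => κs k t τ - κ t τ) < ENNReal.ofReal ε) ∧
      -- uniform convergence on the square
      (∀ ε : ℝ, 0 < ε → ∃ M : ℕ, ∀ k : ℕ, M ≤ k →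
        ∀ t ∈ Icc a b, ∀ τ ∈ Icc a b, ‖κs k t τ - κ t τ‖ < ε) := by
  have hbmem : b ∈ Icc a b := right_mem_Icc.2 hab.le
  have hzero : ∀ k, ∀ t ∈ Icc a b, κs k t b = 0 := fun k t ht =>
    (hker k).2.1 t ht b hbmem ht.2
  -- pointwise edist bound by the kernel norm
  have hpt : ∀ k l, ∀ t ∈ Icc a b, ∀ τ ∈ Icc a b,
      edist (κs k t τ) (κs l t τ) ≤ KNorm d a b (fun t τ => κs k t τ - κs l t τ) := by
    intro k l t ht τ hτ
    have h1 : edist (κs k t τ) (κs l t τ)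
        = edist (κs k t τ - κs l t τ) (κs k t b - κs l t b) := by
      rw [hzero k t ht, hzero l t ht, sub_zero]
      simp [edist_eq_enorm_sub]
    rw [h1]
    refine le_trans (eVariationOn.edist_le (fun τ => κs k t τ - κs l t τ) hτ hbmem) ?_
    unfold KNorm
    exact le_iSup₂_of_le t ht le_rfl
  -- definition of the limit kernel
  set κ : ℝ → ℝ → Matrix (Fin d) (Fin d) ℂ :=
    fun t τ => limUnder atTop (fun k => κs k t τ) with hκdef
  have hconv : ∀ t ∈ Icc a b, ∀ τ ∈ Icc a b,
      Tendsto (fun k => κs k t τ) atTop (𝓝 (κ t τ)) := by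
    intro t ht τ hτ
    have hc : CauchySeq (fun k => κs k t τ) := by
      rw [Metric.cauchySeq_iff]
      intro ε hε
      obtain ⟨M, hM⟩ := hcauchy ε hε
      refine ⟨M, fun m hm n hn => ?_⟩
      have h2 := (hpt m n t ht τ hτ).trans_lt (hM m n hm hn)
      have h3 := ENNReal.toReal_lt_of_lt_ofReal h2
      rwa [← dist_edist] at h3
    obtain ⟨x, hx⟩ := cauchySeq_tendsto_of_complete hc
    have : κ t τ = x := hx.limUnder_eq
    rwa [this]
  -- uniform edist bound
  have hub : ∀ ε : ℝ, 0 < ε → ∃ M : ℕ, ∀ k, M ≤ k → ∀ t ∈ Icc a b, ∀ τ ∈ Icc a b,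
      edist (κs k t τ) (κ t τ) ≤ ENNReal.ofReal ε := by
    intro ε hε
    obtain ⟨M, hM⟩ := hcauchy ε hε
    refine ⟨M, fun k hk t ht τ hτ => ?_⟩
    have hT : Tendsto (fun l => edist (κs k t τ) (κs l t τ)) atTop
        (𝓝 (edist (κs k t τ) (κ t τ))) :=
      Tendsto.edist tendsto_const_nhds (hconv t ht τ hτ)
    refine le_of_tendsto hT ?_
    filter_upwards [eventually_ge_atTop M] with l hl
    exact (hpt k l t ht τ hτ).trans (hM k l hk hl).le
  -- uniform variation bound for the difference
  have hvd : ∀ ε : ℝ, 0 < ε → ∃ M : ℕ, ∀ k, M ≤ k → ∀ t ∈ Icc a b,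
      eVariationOn (fun τ => κs k t τ - κ t τ) (Icc a b) ≤ ENNReal.ofReal ε := by
    intro ε hε
    obtain ⟨M, hM⟩ := hcauchy ε hε
    refine ⟨M, fun k hk t ht => ?_⟩
    by_contra hcon
    push_neg at hcon
    have hls := eVariationOn.lowerSemicontinuous_aux
      (F := fun l τ => κs k t τ - κs l t τ) (p := atTop)
      (f := fun τ => κs k t τ - κ t τ) (s := Icc a b)
      (fun x hx => Tendsto.sub tendsto_const_nhds (hconv t ht x hx)) hcon
    obtain ⟨l, hl1, hl2⟩ := (hls.and (eventually_ge_atTop M)).exists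
    have hle : eVariationOn (fun τ => κs k t τ - κs l t τ) (Icc a b)
        ≤ KNorm d a b (fun t τ => κs k t τ - κs l t τ) := by
      unfold KNorm; exact le_iSup₂_of_le t ht le_rfl
    exact absurd (hl1.trans_le (hle.trans (hM k l hk hl2).le)) (lt_irrefl _)
  -- dist version of hub
  have hubd : ∀ ε : ℝ, 0 < ε → ∃ M : ℕ, ∀ k, M ≤ k → ∀ t ∈ Icc a b, ∀ τ ∈ Icc a b,
      dist (κs k t τ) (κ t τ) ≤ ε := by
    intro ε hε
    obtain ⟨M, hM⟩ := hub ε hε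
    exact ⟨M, fun k hk t ht τ hτ => by
      rw [dist_edist]; exact ENNReal.toReal_le_of_le_ofReal hε.le (hM k hk t ht τ hτ)⟩
  refine ⟨κ, ⟨?_, ?_, ?_, ?_, ?_⟩, ?_, ?_⟩
  · -- measurability
    refine measurable_pi_iff.mpr fun i => ?_
    rw [measurable_pi_iff]; intro j
    refine measurable_of_tendsto_metrizable'
      (f := fun k (p : ↥(Icc a b ×ˢ Icc a b)) => κs k (p : ℝ × ℝ).1 (p : ℝ × ℝ).2 i j)
      atTop (fun k => ?_) ?_
    · exact (measurable_pi_apply j).comp ((measurable_pi_apply i).comp (hker k).1)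
    · rw [tendsto_pi_nhds]
      intro p
      have hp := p.2
      rw [Set.mem_prod] at hp
      exact (((continuous_apply j).comp (continuous_apply i)).continuousAt).tendsto.comp
        (hconv _ hp.1 _ hp.2)
  · -- Volterra vanishing
    intro t ht τ hτ htτ
    refine tendsto_nhds_unique (hconv t ht τ hτ) ?_
    have h0 : ∀ k, κs k t τ = 0 := fun k => (hker k).2.1 t ht τ hτ htτ
    simpa [h0] using (tendsto_const_nhds :
      Tendsto (fun _ : ℕ => (0 : Matrix (Fin d) (Fin d) ℂ)) atTop (𝓝 0))
  · -- left continuity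
    intro t ht x hx
    rw [Metric.continuousWithinAt_iff]
    intro ε hε
    obtain ⟨M, hM⟩ := hubd (ε / 4) (by positivity)
    have hc := (hker M).2.2.1 t ht x hx
    rw [Metric.continuousWithinAt_iff] at hc
    obtain ⟨δ, hδ, hδ'⟩ := hc (ε / 4) (by positivity)
    refine ⟨δ, hδ, fun y hy hyx => ?_⟩
    have h1 : dist (κ t y) (κs M t y) ≤ ε / 4 := by
      rw [dist_comm]; exact hM M le_rfl t ht y hy.1
    have h2 : dist (κs M t y) (κs M t x) < ε / 4 := hδ' hy hyx
    have h3 : dist (κs M t x) (κ t x) ≤ ε / 4 := hM M le_rfl t ht x hx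
    calc dist (κ t y) (κ t x)
        ≤ dist (κ t y) (κs M t y) + dist (κs M t y) (κs M t x) + dist (κs M t x) (κ t x) :=
          dist_triangle4 _ _ _ _
      _ < ε := by linarith
  · -- bounded variation
    obtain ⟨M, hM⟩ := hvd 1 one_pos
    obtain ⟨C, hC⟩ := (hker M).2.2.2.1
    refine ⟨|C| + 1, fun t ht => ?_⟩
    have hadd := myEvarAdd (fun τ => κs M t τ) (fun τ => κ t τ - κs M t τ) (Icc a b)
    have heq : (fun τ => κs M t τ + (κ t τ - κs M t τ)) = κ t := by
      funext τ; abel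
    rw [heq] at hadd
    have hsw : eVariationOn (fun τ => κ t τ - κs M t τ) (Icc a b)
        ≤ ENNReal.ofReal 1 := by
      rw [myEvarSubComm]; exact hM M le_rfl t ht
    calc eVariationOn (κ t) (Icc a b)
        ≤ eVariationOn (fun τ => κs M t τ) (Icc a b)
          + eVariationOn (fun τ => κ t τ - κs M t τ) (Icc a b) := hadd
      _ ≤ ENNReal.ofReal C + ENNReal.ofReal 1 := add_le_add (hC t ht) hsw
      _ ≤ ENNReal.ofReal (|C| + 1) := by
          rw [ENNReal.ofReal_add (abs_nonneg C) zero_le_one]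
          exact add_le_add (ENNReal.ofReal_le_ofReal (le_abs_self C)) le_rfl
  · -- variation near the diagonal
    intro ε hε
    obtain ⟨M, hM⟩ := hvd (ε / 4) (by positivity)
    obtain ⟨η, hη, hη'⟩ := (hker M).2.2.2.2 (ε / 2) (by positivity)
    refine ⟨η, hη, fun t ht τ hτ h1 h2 => ?_⟩
    have hsub : Ico τ t ⊆ Icc a b := fun x hx => ⟨hτ.1.trans hx.1, hx.2.le.trans ht.2⟩
    have hadd := myEvarAdd (fun τ' => κs M t τ') (fun τ' => κ t τ' - κs M t τ') (Ico τ t)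
    have heq : (fun τ' => κs M t τ' + (κ t τ' - κs M t τ')) = κ t := by
      funext τ'; abel
    rw [heq] at hadd
    have hsw : eVariationOn (fun τ' => κ t τ' - κs M t τ') (Ico τ t)
        ≤ ENNReal.ofReal (ε / 4) := by
      rw [myEvarSubComm]
      exact le_trans (eVariationOn.mono _ hsub) (hM M le_rfl t ht)
    calc eVariationOn (κ t) (Ico τ t)
        ≤ eVariationOn (fun τ' => κs M t τ') (Ico τ t)
          + eVariationOn (fun τ' => κ t τ' - κs M t τ') (Ico τ t) := hadd
      _ < ENNReal.ofReal (ε / 2) + ENNReal.ofReal (ε / 2) :=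
          ENNReal.add_lt_add (hη' t ht τ hτ h1 h2)
            (hsw.trans_lt (by
              rw [ENNReal.ofReal_lt_ofReal_iff (by positivity)]; linarith))
      _ = ENNReal.ofReal ε := by
          rw [← ENNReal.ofReal_add (by positivity) (by positivity)]; ring_nf
  · -- norm convergence
    intro ε hε
    obtain ⟨M, hM⟩ := hvd (ε / 2) (by positivity)
    refine ⟨M, fun k hk => ?_⟩
    have hle : KNorm d a b (fun t τ => κs k t τ - κ t τ) ≤ ENNReal.ofReal (ε / 2) := by
      unfold KNorm
      exact iSup₂_le fun t ht => hM k hk t ht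
    exact hle.trans_lt (by rw [ENNReal.ofReal_lt_ofReal_iff hε]; linarith)
  · -- uniform convergence
    intro ε hε
    obtain ⟨M, hM⟩ := hubd (ε / 2) (by positivity)
    refine ⟨M, fun k hk t ht τ hτ => ?_⟩
    have := hM k hk t ht τ hτ
    rw [dist_eq_norm] at this
    linarith

end
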